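/- For every preflow x in a flow network there exists a flow x' with x'(i,j) ≤ x(i,j) for every ordered pair (i,j) of distinct nodes and with the same value, |x'| = |x|. (Any preflow can be transformed into a flow by returning the excess at intermediate nodes towards the source, without altering the amount of flow arriving at the sink.) -/
import Mathlib


open Finset

variable {V : Type*}

/-- The excess of node `v` under `x`: total inflow minus total outflow. -/
def excess [Fintype V] (x : V → V → ℝ) (v : V) : ℝ :=
  (∑ j, x j v) - ∑ j, x v j

/-- `x` is capacity-feasible for capacities `u`: `0 ≤ x i j ≤ u i j` on distinct pairs. -/
def IsCapFeasible (u x : V → V → ℝ) : Prop :=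
  ∀ i j, i ≠ j → 0 ≤ x i j ∧ x i j ≤ u i j

/-- A preflow: capacity-feasible with nonnegative excess at every node other than `s`. -/
def IsPreflow [Fintype V] (u : V → V → ℝ) (s : V) (x : V → V → ℝ) : Prop :=
  IsCapFeasible u x ∧ ∀ v, v ≠ s → 0 ≤ excess x v

/-- A flow: capacity-feasible with zero excess at every node other than `s` and `t`. -/
def IsFlow [Fintype V] (u : V → V → ℝ) (s t : V) (x : V → V → ℝ) : Prop :=
  IsCapFeasible u x ∧ ∀ v, v ≠ s → v ≠ t → excess x v = 0

/-- Residual capacity of the pair `(i,j)` with respect to `x`. -/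
def res (u x : V → V → ℝ) (i j : V) : ℝ := u i j + x j i - x i j

/-- A labeling `d` is valid w.r.t. `x`: `d t = 0` and `d i ≤ d j + 1` across residual arcs. -/
def IsValidLabeling [Fintype V] (u x : V → V → ℝ) (t : V) (d : V → ℕ) : Prop :=
  d t = 0 ∧ ∀ i j, i ≠ j → 0 < res u x i j → d i ≤ d j + 1

/-- Every preflow can be converted into a flow of the same value that is pointwise
no larger on every arc. -/
lemma excess_pert [Fintype V] [DecidableEq V] (y : V → V → ℝ) (j v : V)
    (ε : ℝ) (w : V) :
    excess (fun a b => y a b - if a = j ∧ b = v then ε else 0) w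
      = excess y w - (if w = v then ε else 0) + (if w = j then ε else 0) := by
  unfold excess
  rw [Finset.sum_sub_distrib, Finset.sum_sub_distrib]
  have h1 : ∑ a : V, (if a = j ∧ w = v then ε else 0) = if w = v then ε else 0 := by
    by_cases h : w = v <;> simp [h, Finset.sum_ite_eq']
  have h2 : ∑ b : V, (if w = j ∧ b = v then ε else 0) = if w = j then ε else 0 := by
    by_cases h : w = j <;> simp [h, Finset.sum_ite_eq]
  rw [h1, h2]; ring

lemma excess_split [Fintype V] [DecidableEq V] (y : V → V → ℝ) (v : V) :
    excess y v = (∑ a ∈ univ.erase v, y a v) - ∑ a ∈ univ.erase v, y v a := by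
  unfold excess
  rw [← Finset.sum_erase_add univ _ (mem_univ v),
    ← Finset.sum_erase_add univ (fun a => y v a) (mem_univ v)]
  ring

lemma excess_continuous [Fintype V] (v : V) :
    Continuous fun y : V → V → ℝ => excess y v := by
  unfold excess
  exact (continuous_finset_sum _ fun j _ => (continuous_apply v).comp (continuous_apply j)).sub
    (continuous_finset_sum _ fun j _ => (continuous_apply j).comp (continuous_apply v))


theorem exists_flow_le_preflow_same_value [Fintype V] (s t : V) (hst : s ≠ t)
    (u : V → V → ℝ) (hu : ∀ i j, i ≠ j → 0 ≤ u i j)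
    (x : V → V → ℝ) (hx : IsPreflow u s x) :
    ∃ x' : V → V → ℝ, IsFlow u s t x' ∧ (∀ i j, i ≠ j → x' i j ≤ x i j) ∧
      excess x' t = excess x t := by
  classical
  obtain ⟨hcap, hexc⟩ := hx
  have hxt : 0 ≤ excess x t := hexc t (Ne.symm hst)
  set lo : V → V → ℝ := fun i j => if i = j then x i j else 0 with hlo
  set c : V → ℝ := fun w => if w = t then excess x t else 0 with hc
  have hc0 : ∀ w, 0 ≤ c w := by
    intro w; simp only [hc]; split <;> simp [hxt]
  set S : Set (V → V → ℝ) :=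
    Set.Icc lo x ∩ {y | ∀ w, w ≠ s → c w ≤ excess y w} with hS
  have hlox : lo ≤ x := by
    intro i; intro j
    simp only [hlo]
    split
    · exact le_rfl
    · exact (hcap i j (by assumption)).1
  have hxS : x ∈ S := by
    constructor
    · exact ⟨hlox, le_rfl⟩
    · intro w hw
      simp only [hc]
      split
      · next h => rw [h]
      · exact hexc w hw
  -- compactness
  have hclosed : IsClosed {y : V → V → ℝ | ∀ w, w ≠ s → c w ≤ excess y w} := by
    have : {y : V → V → ℝ | ∀ w, w ≠ s → c w ≤ excess y w}
        = ⋂ w, {y | w ≠ s → c w ≤ excess y w} := by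
      ext y; simp
    rw [this]
    refine isClosed_iInter fun w => ?_
    by_cases hw : w = s
    · simp [hw]
    · simpa [hw] using isClosed_le continuous_const (excess_continuous w)
  have hScomp : IsCompact S := (isCompact_Icc).inter_right hclosed
  have hfcont : Continuous fun y : V → V → ℝ => ∑ i, ∑ j, y i j :=
    continuous_finset_sum _ fun i _ =>
      continuous_finset_sum _ fun j _ => (continuous_apply j).comp (continuous_apply i)
  obtain ⟨y, hyS, hymin⟩ :=
    hScomp.exists_isMinOn ⟨x, hxS⟩ hfcont.continuousOn
  obtain ⟨⟨hylo, hyx⟩, hyexc⟩ := hyS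
  -- key claim: excess y w = c w for all w ≠ s
  have key : ∀ v, v ≠ s → excess y v ≤ c v := by
    intro v hv
    by_contra hgt
    push_neg at hgt
    -- excess y v > c v ≥ 0, so some incoming arc carries positive flow
    have hpos : 0 < excess y v := lt_of_le_of_lt (hc0 v) hgt
    have hout : 0 ≤ ∑ a ∈ univ.erase v, y v a :=
      Finset.sum_nonneg fun a ha => by
        have hav : v ≠ a := fun h => (Finset.mem_erase.mp ha).1 h.symm
        have := hylo v a
        simpa [hlo, hav] using this
    have hin : 0 < ∑ a ∈ univ.erase v, y a v := by
      have := excess_split y v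
      linarith
    obtain ⟨j, hj, hjpos⟩ : ∃ j ∈ univ.erase v, 0 < y j v := by
      by_contra h
      push_neg at h
      exact absurd (Finset.sum_nonpos h) (not_le.mpr hin)
    have hjv : j ≠ v := (Finset.mem_erase.mp hj).1
    set ε : ℝ := min (y j v) (excess y v - c v) with hε
    have hεpos : 0 < ε := lt_min hjpos (by linarith)
    set y' : V → V → ℝ := fun a b => y a b - if a = j ∧ b = v then ε else 0 with hy'
    have hy'S : y' ∈ S := by
      constructor
      · constructor
        · intro a; intro b
          simp only [hy']
          by_cases h : a = j ∧ b = v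
          · obtain ⟨ha, hb⟩ := h
            subst ha; subst hb
            have : ε ≤ y a b := min_le_left _ _
            simp only [and_self, if_pos, ite_true, hlo]
            rw [if_neg hjv]
            linarith
          · simp only [h, if_neg, ite_false, sub_zero]
            exact hylo a b
        · intro a; intro b
          simp only [hy']
          have h1 := hyx a b
          split
          · linarith [hεpos.le]
          · simpa using h1
      · intro w hw
        have := excess_pert y j v ε w
        simp only [hy']
        rw [this]
        by_cases hwv : w = v
        · subst hwv
          rw [if_pos rfl, if_neg (Ne.symm hjv)]
          have : ε ≤ excess y w - c w := min_le_right _ _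
          linarith
        · rw [if_neg hwv]
          by_cases hwj : w = j
          · have := hyexc w hw
            rw [if_pos hwj]; linarith
          · rw [if_neg hwj]
            simpa using hyexc w hw
    have hlt : ∑ i, ∑ b, y' i b < ∑ i, ∑ b, y i b := by
      have hsum : ∀ i : V, ∑ b, y' i b = (∑ b, y i b) - if i = j then ε else 0 := by
        intro i
        simp only [hy']
        rw [Finset.sum_sub_distrib]
        congr 1
        by_cases h : i = j <;> simp [h, Finset.sum_ite_eq]
      calc ∑ i, ∑ b, y' i b = (∑ i, ∑ b, y i b) - ∑ i : V, (if i = j then ε else 0) := by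
            rw [← Finset.sum_sub_distrib]; exact Finset.sum_congr rfl fun i _ => hsum i
        _ = (∑ i, ∑ b, y i b) - ε := by rw [Finset.sum_ite_eq']; simp
        _ < ∑ i, ∑ b, y i b := by linarith
    exact absurd (hymin hy'S) (not_le.mpr hlt)
  refine ⟨y, ⟨?_, ?_⟩, ?_, ?_⟩
  · intro i j hij
    refine ⟨?_, le_trans (hyx i j) (hcap i j hij).2⟩
    have := hylo i j
    simpa [hlo, hij] using this
  · intro v hvs hvt
    have h1 := key v hvs
    have h2 := hyexc v hvs
    have : c v = 0 := by simp [hc, hvt]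
    linarith
  · intro i j _; exact hyx i j
  · have h1 := key t (Ne.symm hst)
    have h2 := hyexc t (Ne.symm hst)
    have : c t = excess x t := by simp [hc]
    linarith
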